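/- For every real parameter M ≥ 1 and all a, b ∈ ℝ, the modified double-well potential satisfies the two-sided Taylor bounds F_M(a) + f_M(a)(b − a) − (1/2)(b − a)² ≤ F_M(b) ≤ F_M(a) + f_M(a)(b − a) + ((3M² − 1)/2)(b − a)². -/
import Mathlib


/-- The modified double-well nonlinearity `f_M` with cut-off parameter `M`. -/
noncomputable def fM (M x : ℝ) : ℝ :=
  if x > M then (3 * M ^ 2 - 1) * x - 2 * M ^ 3
  else if x < -M then (3 * M ^ 2 - 1) * x + 2 * M ^ 3
  else x * (x ^ 2 - 1)

/-- The modified double-well potential `F_M` with cut-off parameter `M`: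
the antiderivative of `f_M`, normalized by `F_M(0) = 1/4`. -/
noncomputable def FM (M x : ℝ) : ℝ :=
  if |x| ≤ M then (1 - x ^ 2) ^ 2 / 4
  else (1 - M ^ 2) ^ 2 / 4 + (3 * M ^ 2 - 1) * (x ^ 2 - M ^ 2) / 2 - 2 * M ^ 3 * (|x| - M)

set_option maxHeartbeats 1000000

lemma fM_gt {M x : ℝ} (h : M < x) : fM M x = (3 * M ^ 2 - 1) * x - 2 * M ^ 3 :=
  if_pos h

lemma fM_lt {M x : ℝ} (hM : 0 < M) (h : x < -M) :
    fM M x = (3 * M ^ 2 - 1) * x + 2 * M ^ 3 := by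
  have h1 : ¬ (x > M) := by intro hc; linarith
  simp [fM, h1, h]

lemma fM_mem {M x : ℝ} (h1 : -M ≤ x) (h2 : x ≤ M) : fM M x = x * (x ^ 2 - 1) := by
  simp [fM, not_lt.2 h1, not_lt.2 h2]

lemma FM_gt {M x : ℝ} (hM : 0 < M) (h : M < x) :
    FM M x = (1 - M ^ 2) ^ 2 / 4 + (3 * M ^ 2 - 1) * (x ^ 2 - M ^ 2) / 2
      - 2 * M ^ 3 * (x - M) := by
  have hx : |x| = x := abs_of_pos (hM.trans h)
  rw [FM, hx, if_neg (not_le.2 h)]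

lemma FM_lt {M x : ℝ} (hM : 0 < M) (h : x < -M) :
    FM M x = (1 - M ^ 2) ^ 2 / 4 + (3 * M ^ 2 - 1) * (x ^ 2 - M ^ 2) / 2
      - 2 * M ^ 3 * (-x - M) := by
  have hx0 : x < 0 := by linarith
  have hx : |x| = -x := abs_of_neg hx0
  rw [FM, hx, if_neg (by push_neg; linarith)]

lemma FM_mem {M x : ℝ} (h1 : -M ≤ x) (h2 : x ≤ M) : FM M x = (1 - x ^ 2) ^ 2 / 4 := by
  rw [FM, if_pos (abs_le.2 ⟨h1, h2⟩)]

lemma fM_neg {M x : ℝ} (hM : 0 < M) : fM M (-x) = -fM M x := by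
  rcases lt_or_ge M x with h | h
  · rw [fM_gt h, fM_lt hM (by linarith)]; ring
  · rcases lt_or_ge x (-M) with h2 | h2
    · rw [fM_lt hM h2, fM_gt (by linarith)]; ring
    · rw [fM_mem h2 h, fM_mem (by linarith) (by linarith)]; ring

lemma FM_neg {M x : ℝ} (_hM : 0 < M) : FM M (-x) = FM M x := by
  unfold FM
  rw [abs_neg, neg_pow]
  ring_nf

lemma FM_aux (M : ℝ) (hM : 1 ≤ M) (a b : ℝ) (ha : -M ≤ a) :
    FM M a + fM M a * (b - a) - (1 / 2) * (b - a) ^ 2 ≤ FM M b ∧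
    FM M b ≤ FM M a + fM M a * (b - a) + ((3 * M ^ 2 - 1) / 2) * (b - a) ^ 2 := by
  have hM0 : (0:ℝ) < M := by linarith
  rcases le_or_gt a M with haM | haM
  · -- a ∈ [-M, M]
    rw [FM_mem ha haM, fM_mem ha haM]
    rcases le_or_gt b M with hb | hb
    · rcases le_or_gt (-M) b with hb2 | hb2
      · -- b ∈ [-M, M]
        rw [FM_mem hb2 hb]
        constructor
        · nlinarith [mul_nonneg (sq_nonneg (b-a)) (by nlinarith [sq_nonneg (a+b), sq_nonneg a] : (0:ℝ) ≤ (a+b)^2 + 2*a^2)]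
        · nlinarith [mul_nonneg (sq_nonneg (b-a)) (by nlinarith : (0:ℝ) ≤ M^2 - a^2),
            mul_nonneg (sq_nonneg (b-a)) (by nlinarith : (0:ℝ) ≤ M^2 - b^2),
            sq_nonneg ((b-a)*(a-b))]
      · -- b < -M
        rw [FM_lt hM0 hb2]
        have hl1 : (0:ℝ) ≤ (M+a)^2*((a-M)^2 + 2*a^2) :=
          mul_nonneg (sq_nonneg _) (by positivity)
        have hl2 : (0:ℝ) ≤ M^2*(b+M)^2 := by positivity
        have hl3 : (0:ℝ) ≤ (M+a)*(M^2 - a*M + a^2)*(-b-M) := by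
          apply mul_nonneg (mul_nonneg (by linarith) _) (by linarith)
          nlinarith [sq_nonneg (M-a), sq_nonneg a, sq_nonneg M]
        have hu1 : (0:ℝ) ≤ (a+M)^2*((5*M-3*a)*(M+a)) :=
          mul_nonneg (sq_nonneg _) (mul_nonneg (by linarith) (by linarith))
        have hu2 : (0:ℝ) ≤ (a+M)^2*(2*M-a)*(-M-b) :=
          mul_nonneg (mul_nonneg (sq_nonneg _) (by linarith)) (by linarith)
        constructor
        · nlinarith [hl1, hl2, hl3]
        · nlinarith [hu1, hu2]
    · -- b > M
      rw [FM_gt hM0 hb]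
      have hl1 : (0:ℝ) ≤ (M-a)^2*((a+M)^2 + 2*a^2) :=
        mul_nonneg (sq_nonneg _) (by positivity)
      have hl2 : (0:ℝ) ≤ M^2*(b-M)^2 := by positivity
      have hl3 : (0:ℝ) ≤ (M-a)*(M^2 + a*M + a^2)*(b-M) := by
        apply mul_nonneg (mul_nonneg (by linarith) _) (by linarith)
        nlinarith [sq_nonneg (M+a), sq_nonneg a, sq_nonneg M]
      have hu1 : (0:ℝ) ≤ (M-a)^2*((5*M+3*a)*(M-a)) :=
        mul_nonneg (sq_nonneg _) (mul_nonneg (by linarith) (by linarith))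
      have hu2 : (0:ℝ) ≤ (M-a)^2*(a+2*M)*(b-M) :=
        mul_nonneg (mul_nonneg (sq_nonneg _) (by linarith)) (by linarith)
      constructor
      · nlinarith [hl1, hl2, hl3]
      · nlinarith [hu1, hu2]
  · -- a > M
    rw [FM_gt hM0 haM, fM_gt haM]
    rcases le_or_gt b M with hb | hb
    · rcases le_or_gt (-M) b with hb2 | hb2
      · -- b ∈ [-M, M]
        rw [FM_mem hb2 hb]
        have hl1 : (0:ℝ) ≤ M^2*(a-M)^2 := by positivity
        have hl2 : (0:ℝ) ≤ (b-M)^2*((M+b)^2 + 2*M^2) :=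
          mul_nonneg (sq_nonneg _) (by positivity)
        have hl3 : (0:ℝ) ≤ M^2*((a-M)*(M-b)) :=
          mul_nonneg (sq_nonneg M) (mul_nonneg (by linarith) (by linarith))
        have hu1 : (0:ℝ) ≤ (b-M)^2*((3*M+b)*(M-b)) :=
          mul_nonneg (sq_nonneg _) (mul_nonneg (by linarith) (by linarith))
        constructor
        · nlinarith [hl1, hl2, hl3]
        · nlinarith [hu1]
      · -- b < -M
        rw [FM_lt hM0 hb2]
        have hl1 : (0:ℝ) ≤ M^2*(a-M)^2 := by positivity
        have hl2 : (0:ℝ) ≤ M^2*M^2 := by positivity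
        have hl3 : (0:ℝ) ≤ M^2*(b+M)^2 := by positivity
        have hl4 : (0:ℝ) ≤ M^3*(a-M) := by
          apply mul_nonneg (by positivity) (by linarith)
        have hl5 : (0:ℝ) ≤ M^2*((3*a-M)*(-b-M)) :=
          mul_nonneg (sq_nonneg M) (mul_nonneg (by linarith) (by linarith))
        have hu1 : (0:ℝ) ≤ M^3*(-b) := by
          apply mul_nonneg (by positivity) (by linarith)
        constructor
        · nlinarith [hl1, hl2, hl3, hl4, hl5]
        · nlinarith [hu1]
    · -- b > M
      rw [FM_gt hM0 hb]
      constructor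
      · nlinarith [mul_nonneg (sq_nonneg M) (sq_nonneg (b-a))]
      · nlinarith [sq_nonneg (b-a)]

/-- Two-sided Taylor bounds for `F_M`:
`F_M(a) + f_M(a)(b − a) − (1/2)(b − a)² ≤ F_M(b)
  ≤ F_M(a) + f_M(a)(b − a) + ((3M² − 1)/2)(b − a)²`. -/
theorem FM_taylor_bounds (M : ℝ) (hM : 1 ≤ M) (a b : ℝ) :
    FM M a + fM M a * (b - a) - (1 / 2) * (b - a) ^ 2 ≤ FM M b ∧
    FM M b ≤ FM M a + fM M a * (b - a) + ((3 * M ^ 2 - 1) / 2) * (b - a) ^ 2 := by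
  have hM0 : (0:ℝ) < M := by linarith
  rcases le_or_gt (-M) a with ha | ha
  · exact FM_aux M hM a b ha
  · have h := FM_aux M hM (-a) (-b) (by linarith)
    rw [FM_neg hM0, FM_neg hM0, fM_neg hM0] at h
    constructor
    · nlinarith [h.1]
    · nlinarith [h.2]
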